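/- Let H be an n×n invertible Hermitian complex matrix my and let A be an n×n Hermitian complex matrix with H·A = A·H. Then for every real t and all n×n complex matrices X and Y, tr((exp(-itA)·X)ᴴ · H⁻² · (exp(-itA)·Y)) = tr(Xᴴ·H⁻²·Y); hence the flow W ↦ exp(-itA)·W generated by the conserved observable A is an isometry of the dynamic metric g_H, i.e. every quantum observable compatible with the Hamiltonian induces a Killing vector field of g_H. -/

import Mathlib

open Matrix

/-- The dynamic metric `g_H(X,Y) = (1/2)·tr(Xᴴ H⁻² Y + Yᴴ H⁻² X)`. -/
noncomputable def gH {n : ℕ} (H X Y : Matrix (Fin n) (Fin n) ℂ) : ℂ :=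
  (1 / 2 : ℂ) * (Xᴴ * (H⁻¹ * H⁻¹) * Y + Yᴴ * (H⁻¹ * H⁻¹) * X).trace

lemma key_trace {n : ℕ} (H A : Matrix (Fin n) (Fin n) ℂ)
    (hHinv : IsUnit H.det) (hA : A.IsHermitian)
    (hcomm : H * A = A * H) (t : ℝ) (X Y : Matrix (Fin n) (Fin n) ℂ) :
    ((NormedSpace.exp ((-(t : ℂ) * Complex.I) • A) * X)ᴴ * (H⁻¹ * H⁻¹) *
        (NormedSpace.exp ((-(t : ℂ) * Complex.I) • A) * Y)).trace
      = (Xᴴ * (H⁻¹ * H⁻¹) * Y).trace := by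
  have hAH : Commute A H⁻¹ := by
    show A * H⁻¹ = H⁻¹ * A
    have h1 : A * H⁻¹ = H⁻¹ * (H * A) * H⁻¹ := by
      rw [← mul_assoc, Matrix.nonsing_inv_mul _ hHinv, one_mul]
    have h2 : H⁻¹ * (A * H) * H⁻¹ = H⁻¹ * A := by
      rw [← mul_assoc, mul_assoc (H⁻¹ * A), Matrix.mul_nonsing_inv _ hHinv, mul_one]
    rw [h1, hcomm, h2]
  set U := NormedSpace.exp ((-(t : ℂ) * Complex.I) • A) with hU
  have hUconj : Uᴴ = NormedSpace.exp (((t : ℂ) * Complex.I) • A) := by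
    rw [hU, ← Matrix.exp_conjTranspose, Matrix.conjTranspose_smul, hA.eq]
    congr 1
    have hsc : star (-(t : ℂ) * Complex.I) = (t : ℂ) * Complex.I := by
      simp [Complex.ext_iff]
    rw [hsc]
  have hUHc : Commute Uᴴ H⁻¹ := by
    rw [hUconj]; exact ((hAH.smul_left _).exp_left)
  have hUU : Uᴴ * U = 1 := by
    have hc : Commute ((((t : ℂ)) * Complex.I) • A) ((-(t : ℂ) * Complex.I) • A) :=
      ((Commute.refl A).smul_left _).smul_right _
    have h0 : ((t : ℂ) * Complex.I) • A + (-(t : ℂ) * Complex.I) • A = (0 : ℂ) • A := by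
      rw [← add_smul]; ring_nf
    rw [hUconj, hU, ← Matrix.exp_add_of_commute _ _ hc, h0, zero_smul, NormedSpace.exp_zero]
  have hmid : Uᴴ * (H⁻¹ * H⁻¹) * U = H⁻¹ * H⁻¹ := by
    rw [(hUHc.mul_right hUHc).eq, mul_assoc, hUU, mul_one]
  have key : (U * X)ᴴ * (H⁻¹ * H⁻¹) * (U * Y) = Xᴴ * (Uᴴ * (H⁻¹ * H⁻¹) * U) * Y := by
    rw [Matrix.conjTranspose_mul]; noncomm_ring
  rw [key, hmid]

theorem conserved_observable_killing {n : ℕ} (H A : Matrix (Fin n) (Fin n) ℂ)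
    (hH : H.IsHermitian) (hHinv : IsUnit H.det) (hA : A.IsHermitian)
    (hcomm : H * A = A * H) (t : ℝ) (X Y : Matrix (Fin n) (Fin n) ℂ) :
    ((NormedSpace.exp ((-(t : ℂ) * Complex.I) • A) * X)ᴴ * (H⁻¹ * H⁻¹) *
        (NormedSpace.exp ((-(t : ℂ) * Complex.I) • A) * Y)).trace
      = (Xᴴ * (H⁻¹ * H⁻¹) * Y).trace ∧
    gH H (NormedSpace.exp ((-(t : ℂ) * Complex.I) • A) * X)
        (NormedSpace.exp ((-(t : ℂ) * Complex.I) • A) * Y) = gH H X Y := by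
  refine ⟨key_trace H A hHinv hA hcomm t X Y, ?_⟩
  unfold gH
  rw [Matrix.trace_add, Matrix.trace_add,
    key_trace H A hHinv hA hcomm t X Y, key_trace H A hHinv hA hcomm t Y X]
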